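/- Let f : X → X be a homeomorphism of a compact metric space and Λ a closed f-invariant subset with nonempty interior such that f|_Λ is chain transitive and f has shadowing on B_b(Λ) for some b > 0. Then Λ is simultaneously an initial and a terminal chain component of f. -/
import Mathlib


open Metric Filter Topology Set

variable {X : Type*}

/-- `(c i)_{i=0}^k` is a `δ`-chain of `f` (up to index `k`). -/
def IsDeltaChain [MetricSpace X] (f : X → X) (δ : ℝ) (k : ℕ) (c : ℕ → X) : Prop :=
  ∀ i < k, dist (f (c i)) (c (i + 1)) ≤ δ

/-- `x → y` : for every `δ > 0` there is a `δ`-chain from `x` to `y`. -/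
def ChainReach [MetricSpace X] (f : X → X) (x y : X) : Prop :=
  ∀ δ > 0, ∃ k ≥ 1, ∃ c : ℕ → X, c 0 = x ∧ c k = y ∧ IsDeltaChain f δ k c

/-- The chain recurrent set. -/
def ChainRec [MetricSpace X] (f : X → X) : Set X := {x | ChainReach f x x}

/-- `C` is a chain component of `f`. -/
def IsChainComponent [MetricSpace X] (f : X → X) (C : Set X) : Prop :=
  ∃ x, ChainReach f x x ∧
    C = {y | ChainReach f y y ∧ ChainReach f x y ∧ ChainReach f y x}

/-- A set is chain stable iff points chain-reachable from it stay in it. -/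
def ChainStable [MetricSpace X] (f : X → X) (S : Set X) : Prop :=
  ∀ x ∈ S, ∀ y, ChainReach f x y → y ∈ S

/-- `S` is "initially stable": if `y → x` with `x ∈ S` then `y ∈ S`. -/
def InitialStable [MetricSpace X] (f : X → X) (S : Set X) : Prop :=
  ∀ x ∈ S, ∀ y, ChainReach f y x → y ∈ S

/-- `f` restricted to `Λ` is chain transitive. -/
def ChainTransitiveOn [MetricSpace X] (f : X → X) (Λ : Set X) : Prop :=
  ∀ p ∈ Λ, ∀ q ∈ Λ, ∀ δ > 0, ∃ k ≥ 1, ∃ c : ℕ → X,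
    c 0 = p ∧ c k = q ∧ (∀ i ≤ k, c i ∈ Λ) ∧ IsDeltaChain f δ k c

/-- `f` has shadowing on `S`. -/
def ShadowsOn [MetricSpace X] (f : X → X) (S : Set X) : Prop :=
  ∀ ε > 0, ∃ δ > 0, ∀ (k : ℕ) (c : ℕ → X), (∀ i ≤ k, c i ∈ S) →
    IsDeltaChain f δ k c → ∃ x, ∀ i ≤ k, dist (c i) (f^[i] x) ≤ ε

/-- Iterate of a homeomorphism indexed by `ℤ`. -/
def hIter [TopologicalSpace X] (f : X ≃ₜ X) (i : ℤ) : X → X :=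
  if 0 ≤ i then (⇑f)^[i.toNat] else (⇑f.symm)^[(-i).toNat]

/-- A `δ`-limit-pseudo orbit of the homeomorphism `f`. -/
def IsLimitPseudoOrbit [MetricSpace X] (f : X ≃ₜ X) (δ : ℝ) (ξ : ℤ → X) : Prop :=
  (∀ i : ℤ, dist (f (ξ i)) (ξ (i + 1)) ≤ δ) ∧
  Tendsto (fun i : ℤ => dist (f (ξ i)) (ξ (i + 1))) atBot (nhds 0) ∧
  Tendsto (fun i : ℤ => dist (f (ξ i)) (ξ (i + 1))) atTop (nhds 0)

/-- `f` has L-shadowing on `S`. -/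
def LShadowsOn [MetricSpace X] (f : X ≃ₜ X) (S : Set X) : Prop :=
  ∀ ε > 0, ∃ δ > 0, ∀ ξ : ℤ → X, (∀ i : ℤ, ξ i ∈ S) →
    IsLimitPseudoOrbit f δ ξ →
    ∃ x : X, (∀ i : ℤ, dist (ξ i) (hIter f i x) ≤ ε) ∧
      Tendsto (fun i : ℤ => dist (ξ i) (hIter f i x)) atBot (nhds 0) ∧
      Tendsto (fun i : ℤ => dist (ξ i) (hIter f i x)) atTop (nhds 0)

/-- `f` is expansive on `S`. -/
def ExpansiveOn [MetricSpace X] (f : X ≃ₜ X) (S : Set X) : Prop :=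
  ∃ e > 0, ∀ x y : X, (∀ i : ℤ, hIter f i x ∈ S) → (∀ i : ℤ, hIter f i y ∈ S) →
    (∀ i : ℤ, dist (hIter f i x) (hIter f i y) ≤ e) → x = y

/-- Closed `b`-neighborhood of `S`. -/
def Nbhd [MetricSpace X] (b : ℝ) (S : Set X) : Set X := {x | Metric.infDist x S ≤ b}

/-- Attractor for a continuous map `f`. -/
def IsAttractor [TopologicalSpace X] (f : X → X) (Λ : Set X) : Prop :=
  IsClosed Λ ∧ f '' Λ = Λ ∧
    ∃ U : Set X, IsOpen U ∧ f '' closure U ⊆ U ∧ Λ = ⋂ i : ℕ, f^[i] '' U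

/-- `f` is (topologically) mixing. -/
def IsMixing [TopologicalSpace X] (f : X → X) : Prop :=
  ∀ U V : Set X, IsOpen U → IsOpen V → U.Nonempty → V.Nonempty →
    ∃ j : ℕ, ∀ i ≥ j, (f^[i] '' U ∩ V).Nonempty

/-- The ω-limit set of `x` under `f`. -/
def OmegaSet [TopologicalSpace X] (f : X → X) (x : X) : Set X :=
  {y | ∃ φ : ℕ → ℕ, StrictMono φ ∧ Tendsto (fun j => f^[φ j] x) atTop (nhds y)}

/-- `M` is a minimal set for `f`. -/
def IsMinimalSet [TopologicalSpace X] (f : X → X) (M : Set X) : Prop :=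
  M.Nonempty ∧ IsClosed M ∧ f '' M ⊆ M ∧ ∀ x ∈ M, OmegaSet f x = M

/-- Uniform continuity on a compact metric space, with `≤` bounds. -/
private lemma uc {X : Type*} [MetricSpace X] [CompactSpace X] {g : X → X} (hg : Continuous g) :
    ∀ δ > 0, ∃ γ > 0, ∀ u v : X, dist u v ≤ γ → dist (g u) (g v) ≤ δ := by
  intro δ hδ
  have h := CompactSpace.uniformContinuous_of_continuous hg
  rw [Metric.uniformContinuous_iff] at h
  obtain ⟨γ, hγ0, hγ⟩ := h δ hδ
  exact ⟨γ / 2, by positivity, fun u v huv =>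
    (hγ (lt_of_le_of_lt huv (by linarith))).le⟩

/-- Reversing a chain for `g` gives a chain for a uniformly continuous left inverse `g'`. -/
private lemma chain_rev {X : Type*} [MetricSpace X] {g g' : X → X}
    (hgg : ∀ x, g' (g x) = x) {δ γ : ℝ}
    (hγ : ∀ u v : X, dist u v ≤ γ → dist (g' u) (g' v) ≤ δ)
    (k : ℕ) (c : ℕ → X) (hc : IsDeltaChain g γ k c) :
    IsDeltaChain g' δ k (fun j => c (k - j)) := by
  intro i hi
  have h1 : k - (i + 1) < k := by omega
  have h2 := hc _ h1
  have h3 : k - (i + 1) + 1 = k - i := by omega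
  rw [h3] at h2
  have h4 := hγ _ _ h2
  rw [hgg] at h4
  simpa [dist_comm] using h4

private lemma symm_iter {X : Type*} [TopologicalSpace X] (f : X ≃ₜ X) (k : ℕ) (w : X) :
    ∀ i ≤ k, (⇑f.symm)^[i] ((⇑f)^[k] w) = (⇑f)^[k - i] w := by
  intro i
  induction i with
  | zero => intro _; simp
  | succ i ih =>
    intro h
    rw [Function.iterate_succ_apply', ih (by omega)]
    have h2 : k - i = (k - (i + 1)) + 1 := by omega
    rw [h2, Function.iterate_succ_apply']
    simp

/-- The key lemma: chain stability of `Λ`. -/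
private lemma stable_aux {X : Type*} [MetricSpace X] [CompactSpace X] (f : X ≃ₜ X)
    (Λ : Set X) (hΛc : IsClosed Λ) (hΛinv : ⇑f '' Λ = Λ)
    (hint : (interior Λ).Nonempty) (hct : ChainTransitiveOn (⇑f) Λ)
    (b : ℝ) (hb : 0 < b) (hsh : ShadowsOn (⇑f) (Nbhd b Λ)) :
    ChainStable (⇑f) Λ := by
  have hmapsto : ∀ z ∈ Λ, f z ∈ Λ := by
    intro z hz
    rw [← hΛinv]; exact Set.mem_image_of_mem _ hz
  have hiter : ∀ (j : ℕ) (w : X), w ∈ Λ → (⇑f)^[j] w ∈ Λ := by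
    intro j
    induction j with
    | zero => intro w hw; simpa using hw
    | succ j ih =>
      intro w hw
      rw [Function.iterate_succ_apply']
      exact hmapsto _ (ih w hw)
  intro x hx y hxy
  -- reduce to showing y is within every ε₀ of Λ
  rw [← hΛc.closure_eq, Metric.mem_closure_iff]
  intro ε₀ hε₀
  obtain ⟨p, hp⟩ := hint
  obtain ⟨r, hr, hball⟩ := Metric.isOpen_iff.1 isOpen_interior p hp
  have hpΛ : p ∈ Λ := interior_subset hp
  have hballΛ : Metric.ball p r ⊆ Λ := hball.trans interior_subset
  obtain ⟨γ, hγ0, hγ⟩ := uc f.continuous (b / 2) (by positivity)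
  set ε : ℝ := min (ε₀ / 2) (min (r / 2) (min (b / 2) γ)) with hεdef
  have hε0 : 0 < ε := by
    apply lt_min (by linarith)
    exact lt_min (by linarith) (lt_min (by linarith) hγ0)
  have hεe : ε ≤ ε₀ / 2 := min_le_left _ _
  have hεr : ε ≤ r / 2 := le_trans (min_le_right _ _) (min_le_left _ _)
  have hεb : ε ≤ b / 2 :=
    le_trans (min_le_right _ _) (le_trans (min_le_right _ _) (min_le_left _ _))
  have hεγ : ε ≤ γ :=
    le_trans (min_le_right _ _) (le_trans (min_le_right _ _) (min_le_right _ _))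
  obtain ⟨δ₁, hδ₁0, hδ₁⟩ := hsh ε hε0
  set δ : ℝ := min δ₁ (b / 2) with hδdef
  have hδ0 : 0 < δ := lt_min hδ₁0 (by linarith)
  have hδδ₁ : δ ≤ δ₁ := min_le_left _ _
  have hδb : δ ≤ b / 2 := min_le_right _ _
  obtain ⟨k, hk1, c, hc0, hck, hc⟩ := hxy δ hδ0
  have hΛcpt : IsCompact Λ := hΛc.isCompact
  have hΛne : Λ.Nonempty := ⟨p, hpΛ⟩
  -- main induction : every point of the chain is within ε of Λ
  have key : ∀ i, i ≤ k → ∀ j ≤ i, infDist (c j) Λ ≤ ε := by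
    intro i
    induction i with
    | zero =>
      intro _ j hj
      interval_cases j
      rw [hc0, infDist_zero_of_mem hx]
      exact hε0.le
    | succ i ih =>
      intro hik j hj
      have H : ∀ j ≤ i, infDist (c j) Λ ≤ ε := ih (by omega)
      rcases Nat.lt_succ_iff_lt_or_eq.1 (Nat.lt_succ_of_le hj) with h | h
      · exact H j (by omega)
      · subst h
        -- first: c (i+1) is within b of Λ
        obtain ⟨q, hqΛ, hq⟩ := hΛcpt.exists_infDist_eq_dist hΛne (c i)
        have hqd : dist (c i) q ≤ γ := by
          rw [← hq]; exact le_trans (H i le_rfl) hεγ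
        have hfq : dist (f (c i)) (f q) ≤ b / 2 := hγ _ _ hqd
        have hchain_i : dist (f (c i)) (c (i + 1)) ≤ δ := hc i (by omega)
        have hnextb : infDist (c (i + 1)) Λ ≤ b := by
          calc infDist (c (i + 1)) Λ ≤ dist (c (i + 1)) (f q) :=
                infDist_le_dist_of_mem (hmapsto q hqΛ)
            _ ≤ dist (c (i + 1)) (f (c i)) + dist (f (c i)) (f q) := dist_triangle _ _ _
            _ ≤ δ + b / 2 := by
                rw [dist_comm]; exact add_le_add hchain_i hfq
            _ ≤ b := by linarith
        -- chain in Λ from p to x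
        obtain ⟨m, hm1, a, ha0, ham, haΛ, ha⟩ := hct p hpΛ x hx δ hδ0
        -- the concatenated chain
        set d : ℕ → X := fun j => if j ≤ m then a j else c (j - m) with hddef
        have hda : ∀ j ≤ m, d j = a j := by
          intro j hjm; simp [hddef, hjm]
        have hdc : ∀ j, m ≤ j → d j = c (j - m) := by
          intro j hjm
          by_cases h' : j ≤ m
          · have hjm' : j = m := le_antisymm h' hjm
            subst hjm'
            simp [hddef, ham, ← hc0]
          · simp [hddef, h']
        have hdchain : IsDeltaChain (⇑f) δ₁ (m + (i + 1)) d := by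
          intro t ht
          by_cases htm : t < m
          · rw [hda t htm.le, hda (t + 1) (by omega)]
            exact le_trans (ha t htm) hδδ₁
          · push_neg at htm
            rw [hdc t htm, hdc (t + 1) (by omega)]
            have h5 : t + 1 - m = (t - m) + 1 := by omega
            rw [h5]
            exact le_trans (hc (t - m) (by omega)) hδδ₁
        have hdS : ∀ j ≤ m + (i + 1), d j ∈ Nbhd b Λ := by
          intro j hjle
          by_cases hjm : j ≤ m
          · rw [hda j hjm]
            show infDist (a j) Λ ≤ b
            rw [infDist_zero_of_mem (haΛ j hjm)]
            exact hb.le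
          · push_neg at hjm
            rw [hdc j hjm.le]
            show infDist (c (j - m)) Λ ≤ b
            rcases Nat.lt_succ_iff_lt_or_eq.1
                (Nat.lt_succ_of_le (show j - m ≤ i + 1 by omega)) with h' | h'
            · exact le_trans (H _ (by omega)) (by linarith)
            · rw [h']; exact hnextb
        obtain ⟨w, hw⟩ := hδ₁ (m + (i + 1)) d hdS hdchain
        have hw0 : dist p w ≤ ε := by
          have := hw 0 (by omega)
          rw [hda 0 (by omega), ha0] at this
          simpa using this
        have hwΛ : w ∈ Λ := hballΛ (by
          rw [Metric.mem_ball, dist_comm]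
          exact lt_of_le_of_lt hw0 (by linarith))
        have hfin := hw (m + (i + 1)) le_rfl
        rw [hdc (m + (i + 1)) (by omega)] at hfin
        have h6 : m + (i + 1) - m = i + 1 := by omega
        rw [h6] at hfin
        exact le_trans (infDist_le_dist_of_mem (hiter _ w hwΛ)) hfin
  have hyclose : infDist y Λ ≤ ε := by
    rw [← hck]; exact key k le_rfl k le_rfl
  obtain ⟨q, hqΛ, hq⟩ := hΛcpt.exists_infDist_eq_dist hΛne y
  exact ⟨q, hqΛ, by rw [← hq]; linarith⟩

theorem stmt7 [MetricSpace X] [CompactSpace X] (f : X ≃ₜ X)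
    (Λ : Set X) (hΛc : IsClosed Λ) (hΛinv : ⇑f '' Λ = Λ)
    (hint : (interior Λ).Nonempty) (hct : ChainTransitiveOn (⇑f) Λ)
    (b : ℝ) (hb : 0 < b) (hsh : ShadowsOn (⇑f) (Nbhd b Λ)) :
    IsChainComponent (⇑f) Λ ∧ ChainStable (⇑f) Λ ∧ InitialStable (⇑f) Λ := by
  have hΛne : Λ.Nonempty := Set.Nonempty.mono interior_subset hint
  have hstab : ChainStable (⇑f) Λ := stable_aux f Λ hΛc hΛinv hint hct b hb hsh
  -- chain reachability inside Λ
  have hreach : ∀ u ∈ Λ, ∀ v ∈ Λ, ChainReach (⇑f) u v := by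
    intro u hu v hv δ hδ
    obtain ⟨k, hk, c, h0, hk', _, hch⟩ := hct u hu v hv δ hδ
    exact ⟨k, hk, c, h0, hk', hch⟩
  -- hypotheses for f.symm
  have hinv' : ⇑f.symm '' Λ = Λ := by
    have h := congrArg (Set.image ⇑f.symm) hΛinv
    rw [Set.image_image] at h
    simpa using h.symm
  have hct' : ChainTransitiveOn (⇑f.symm) Λ := by
    intro u hu v hv δ hδ
    obtain ⟨γ, hγ0, hγ⟩ := uc f.symm.continuous δ hδ
    obtain ⟨k, hk, c, h0, hk', hcΛ, hch⟩ := hct v hv u hu γ hγ0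
    refine ⟨k, hk, fun j => c (k - j), by simp [hk'], by simp [h0],
      fun i _ => hcΛ _ (Nat.sub_le _ _), ?_⟩
    exact chain_rev f.symm_apply_apply hγ k c hch
  have hsh' : ShadowsOn (⇑f.symm) (Nbhd b Λ) := by
    intro ε hε
    obtain ⟨δ₁, hδ₁0, hδ₁⟩ := hsh ε hε
    obtain ⟨γ, hγ0, hγ⟩ := uc f.continuous δ₁ hδ₁0
    refine ⟨γ, hγ0, fun k c hcS hch => ?_⟩
    have hrev : IsDeltaChain (⇑f) δ₁ k (fun j => c (k - j)) :=
      chain_rev f.apply_symm_apply hγ k c hch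
    obtain ⟨w, hw⟩ := hδ₁ k (fun j => c (k - j))
      (fun i _ => hcS _ (Nat.sub_le _ _)) hrev
    refine ⟨(⇑f)^[k] w, fun i hik => ?_⟩
    rw [symm_iter f k w i hik]
    have h1 := hw (k - i) (Nat.sub_le _ _)
    have h2 : k - (k - i) = i := by omega
    rw [h2] at h1
    exact h1
  have hstab' : ChainStable (⇑f.symm) Λ :=
    stable_aux f.symm Λ hΛc hinv' hint hct' b hb hsh'
  -- initial stability
  have hinit : InitialStable (⇑f) Λ := by
    intro x hx y hyx
    refine hstab' x hx y ?_
    intro δ hδ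
    obtain ⟨γ, hγ0, hγ⟩ := uc f.symm.continuous δ hδ
    obtain ⟨k, hk, c, h0, hk', hch⟩ := hyx γ hγ0
    exact ⟨k, hk, fun j => c (k - j), by simp [hk'], by simp [h0],
      chain_rev f.symm_apply_apply hγ k c hch⟩
  refine ⟨?_, hstab, hinit⟩
  obtain ⟨p, hp⟩ := hΛne
  refine ⟨p, hreach p hp p hp, ?_⟩
  ext y
  constructor
  · intro hy
    exact ⟨hreach y hy y hy, hreach p hp y hy, hreach y hy p hp⟩
  · rintro ⟨-, hpy, -⟩
    exact hstab p hp y hpy
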